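/- Fix p ∈ (0,1) and suppose each hidden layer j of an architecture a = (a_0,...,a_D), D ≥ 3, has a_j(a_{j-1}+1) ≤ w parameters for j = 2,...,D-1. If the initialization has independent coordinates each negative with probability at least p, then the probability that the network realization N_a^{Θ_0} is a constant function is at least 1 - (1 - p^w)^{D-2}. -/

import Mathlib

open MeasureTheory ProbabilityTheory

noncomputable section

/-- `layerSum a j = ∑_{i=1}^{j} a_i (a_{i-1}+1)`, the number of parameters in layers `1,…,j`. -/
def layerSum (a : ℕ → ℕ) (j : ℕ) : ℕ := ∑ i ∈ Finset.Icc 1 j, a i * (a (i - 1) + 1)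

/-- The affine map of a layer with `m` outputs, `n` inputs, parameters read from `θ`
starting at offset `k` (weights row-wise, then biases). -/
def affApply (m n : ℕ) (θ : ℕ → ℝ) (k : ℕ) (y : Fin n → ℝ) : Fin m → ℝ :=
  fun i => (∑ l : Fin n, θ (k + i.val * n + l.val) * y l) + θ (k + m * n + i.val)

/-- Forward pass through the first `j` layers of the network, with componentwise ReLU
applied after each affine layer. -/
def fwd (a : ℕ → ℕ) (θ : ℕ → ℝ) (x : Fin (a 0) → ℝ) : (j : ℕ) → Fin (a j) → ℝ
  | 0 => x
  | j + 1 => fun i => max (affApply (a (j + 1)) (a j) θ (layerSum a j) (fwd a θ x j) i) 0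

/-- The realization `N_a^θ : ℝ^{a 0} → ℝ^{a D}` of the fully connected feedforward ReLU
network with architecture `a = (a 0, …, a D)` and parameters `θ`:
ReLU after each of the hidden layers `1,…,D-1`, linear read-out layer `D`. -/
def realization (a : ℕ → ℕ) (D : ℕ) (θ : ℕ → ℝ) (x : Fin (a 0) → ℝ) : Fin (a D) → ℝ :=
  affApply (a D) (a (D - 1)) θ (layerSum a (D - 1)) (fwd a θ x (D - 1))

/-- All weights and biases of layer `j` (the parameter block with indices in
`[layerSum a (j-1), layerSum a j)`) are strictly negative. -/
def layerNeg (a : ℕ → ℕ) (j : ℕ) (θ : ℕ → ℝ) : Prop :=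
  ∀ i, layerSum a (j - 1) ≤ i → i < layerSum a j → θ i < 0

/-- The inactive set `I_a`: some hidden layer `j` with `1 < j < D` has all its weights and
biases strictly negative. -/
def Inactive (a : ℕ → ℕ) (D : ℕ) (θ : ℕ → ℝ) : Prop :=
  ∃ j, 1 < j ∧ j < D ∧ layerNeg a j θ

lemma layerSum_succ (a : ℕ → ℕ) (j : ℕ) :
    layerSum a (j + 1) = layerSum a j + a (j + 1) * (a j + 1) := by
  unfold layerSum
  rw [Finset.sum_Icc_succ_top (by omega : 1 ≤ j + 1)]
  simp

lemma layerSum_mono (a : ℕ → ℕ) : Monotone (layerSum a) := by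
  intro i j hij
  exact Finset.sum_le_sum_of_subset (Finset.Icc_subset_Icc_right hij)

lemma fwd_nonneg (a : ℕ → ℕ) (θ : ℕ → ℝ) (x : Fin (a 0) → ℝ) (j : ℕ) (hj : 1 ≤ j)
    (i : Fin (a j)) : 0 ≤ fwd a θ x j i := by
  obtain ⟨k, rfl⟩ : ∃ k, j = k + 1 := ⟨j - 1, by omega⟩
  exact le_max_right _ _

lemma fwd_zero_of_layerNeg (a : ℕ → ℕ) (θ : ℕ → ℝ) (j : ℕ) (hj : 2 ≤ j)
    (hneg : layerNeg a j θ) (x : Fin (a 0) → ℝ) :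
    fwd a θ x j = fun _ => 0 := by
  obtain ⟨k, rfl⟩ : ∃ k, j = k + 1 := ⟨j - 1, by omega⟩
  have hk1 : 1 ≤ k := by omega
  funext i
  show max (affApply (a (k + 1)) (a k) θ (layerSum a k) (fwd a θ x k) i) 0 = 0
  apply max_eq_right
  unfold affApply
  have hmem : ∀ r : ℕ, r < a (k + 1) * (a k + 1) → θ (layerSum a k + r) < 0 := by
    intro r hr
    apply hneg
    · simp only [Nat.add_sub_cancel]
      exact Nat.le_add_right _ _
    · rw [layerSum_succ]
      omega
  have hbias : θ (layerSum a k + a (k + 1) * a k + i.val) < 0 := by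
    have hlt : a (k + 1) * a k + i.val < a (k + 1) * (a k + 1) := by
      have h := i.isLt
      have heq : a (k + 1) * (a k + 1) = a (k + 1) * a k + a (k + 1) := by ring
      omega
    have h := hmem (a (k + 1) * a k + i.val) hlt
    rwa [← Nat.add_assoc] at h
  have hsum : (∑ l : Fin (a k), θ (layerSum a k + i.val * a k + l.val) * fwd a θ x k l) ≤ 0 := by
    apply Finset.sum_nonpos
    intro l _
    apply mul_nonpos_of_nonpos_of_nonneg
    · have hlt : i.val * a k + l.val < a (k + 1) * (a k + 1) := by
        have h1 : i.val * a k + l.val < i.val * a k + a k := by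
          have := l.isLt; omega
        have h2 : i.val * a k + a k = (i.val + 1) * a k := by ring
        have h3 : (i.val + 1) * a k ≤ a (k + 1) * a k := Nat.mul_le_mul_right _ i.isLt
        have h4 : a (k + 1) * a k ≤ a (k + 1) * (a k + 1) := Nat.mul_le_mul_left _ (by omega)
        omega
      have h := hmem (i.val * a k + l.val) hlt
      rw [← Nat.add_assoc] at h
      exact h.le
    · exact fwd_nonneg a θ x k hk1 l
  linarith

lemma fwd_eq_of_eq (a : ℕ → ℕ) (θ : ℕ → ℝ) {x x' : Fin (a 0) → ℝ} {j : ℕ}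
    (h : fwd a θ x j = fwd a θ x' j) (t : ℕ) :
    fwd a θ x (j + t) = fwd a θ x' (j + t) := by
  induction t with
  | zero => exact h
  | succ t ih =>
    show fwd a θ x ((j + t) + 1) = fwd a θ x' ((j + t) + 1)
    simp only [fwd, ih]

lemma realization_const (a : ℕ → ℕ) (D : ℕ) (hD : 3 ≤ D) (θ : ℕ → ℝ)
    (h : Inactive a D θ) : ∃ c, ∀ x, realization a D θ x = c := by
  obtain ⟨j, hj1, hjD, hneg⟩ := h
  refine ⟨realization a D θ (fun _ => 0), fun x => ?_⟩
  unfold realization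
  have h0 : fwd a θ x j = fwd a θ (fun _ => 0) j := by
    rw [fwd_zero_of_layerNeg a θ j (by omega) hneg x,
      fwd_zero_of_layerNeg a θ j (by omega) hneg]
  have h1 := fwd_eq_of_eq a θ h0 (D - 1 - j)
  have h2 : j + (D - 1 - j) = D - 1 := by omega
  rw [h2] at h1
  rw [h1]

end

/-- If every hidden layer `j ∈ {2,…,D-1}` of the architecture has at most `w` parameters
and the initialization `Θ0` has independent coordinates, each strictly negative with
probability at least `p`, then the realization `N_a^{Θ0}` is a constant function with
probability at least `1 - (1 - p^w)^{D-2}`. -/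
theorem stmt16 {Ω : Type*} [MeasurableSpace Ω] (μ : Measure Ω) [IsProbabilityMeasure μ]
    (a : ℕ → ℕ) (D : ℕ) (hD : 3 ≤ D) (hpos : ∀ i, i ≤ D → 0 < a i)
    (w : ℕ) (hw : ∀ j, 2 ≤ j → j ≤ D - 1 → a j * (a (j - 1) + 1) ≤ w)
    (p : ℝ) (hp : p ∈ Set.Ioo (0 : ℝ) 1)
    (Θ0 : Ω → ℕ → ℝ) (hΘ0 : Measurable Θ0)
    (hcoord : iIndepFun
      (fun i ω => Θ0 ω i) μ)
    (hneg : ∀ i : ℕ, ENNReal.ofReal p ≤ μ {ω | Θ0 ω i < 0}) :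
    ENNReal.ofReal (1 - (1 - p ^ w) ^ (D - 2)) ≤
      μ {ω | ∃ c : Fin (a D) → ℝ, ∀ x : Fin (a 0) → ℝ, realization a D (Θ0 ω) x = c} := by
  classical
  set f : ℕ → Ω → ℝ := fun i ω => Θ0 ω i with hfdef
  have hfm : ∀ i, Measurable (f i) := fun i => (measurable_pi_apply i).comp hΘ0
  set A : ℕ → Set Ω := fun i => f i ⁻¹' Set.Iio 0 with hAdef
  have hAm : ∀ i, MeasurableSet (A i) := fun i => (hfm i) measurableSet_Iio
  have hAcomap : ∀ i, MeasurableSet[(inferInstance : MeasurableSpace ℝ).comap (f i)] (A i) :=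
    fun i => ⟨Set.Iio 0, measurableSet_Iio, rfl⟩
  set B : ℕ → Finset ℕ := fun j => Finset.Ico (layerSum a (j - 1)) (layerSum a j) with hBdef
  set E : ℕ → Set Ω := fun j => ⋂ i ∈ B j, A i with hEdef
  have hEm : ∀ j, MeasurableSet (E j) :=
    fun j => Finset.measurableSet_biInter _ (fun i _ => hAm i)
  -- disjointness of blocks
  have hBdisj : ∀ j j' : ℕ, j < j' → Disjoint (↑(B j) : Set ℕ) ↑(B j') := by
    intro j j' hlt
    rw [Set.disjoint_left]
    intro x hx hx'
    simp only [hBdef, Finset.coe_Ico, Set.mem_Ico] at hx hx'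
    have := layerSum_mono a (show j ≤ j' - 1 by omega)
    omega
  have hBdisj' : ∀ j j' : ℕ, j ≠ j' → Disjoint (↑(B j) : Set ℕ) ↑(B j') := by
    intro j j' hne
    rcases lt_or_gt_of_ne hne with h | h
    · exact hBdisj j j' h
    · exact (hBdisj j' j h).symm
  -- measurability of E j in grouped σ-algebras
  have hEsup : ∀ (S : Set ℕ) (j : ℕ), (↑(B j) : Set ℕ) ⊆ S →
      MeasurableSet[⨆ i ∈ S, (inferInstance : MeasurableSpace ℝ).comap (f i)] (E j) := by
    intro S j hS
    have hA' : ∀ i ∈ B j,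
        MeasurableSet[⨆ i ∈ S, (inferInstance : MeasurableSpace ℝ).comap (f i)] (A i) := by
      intro i hi
      have hle : (inferInstance : MeasurableSpace ℝ).comap (f i) ≤
          ⨆ i ∈ S, (inferInstance : MeasurableSpace ℝ).comap (f i) :=
        le_iSup₂ (f := fun i (_ : i ∈ S) => (inferInstance : MeasurableSpace ℝ).comap (f i))
          i (hS hi)
      exact hle _ (hAcomap i)
    exact Finset.measurableSet_biInter _ hA'
  -- product formula over disjoint blocks
  have key : ∀ s : Finset ℕ, μ (⋂ j ∈ s, (E j)ᶜ) = ∏ j ∈ s, μ ((E j)ᶜ) := by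
    intro s
    induction s using Finset.induction with
    | empty => simp
    | @insert j₀ s hj₀s ih =>
      have hdisj : Disjoint (↑(B j₀) : Set ℕ) (⋃ j ∈ (↑s : Set ℕ), (↑(B j) : Set ℕ)) := by
        rw [Set.disjoint_iUnion₂_right]
        intro j hj
        exact hBdisj' j₀ j (fun h => hj₀s (h ▸ hj))
      have hind := indep_iSup_of_disjoint
        (fun i => (hfm i).comap_le) hcoord.iIndep hdisj
      have h1 : MeasurableSet[⨆ i ∈ (↑(B j₀) : Set ℕ),
          (inferInstance : MeasurableSpace ℝ).comap (f i)] ((E j₀)ᶜ) :=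
        MeasurableSet.compl (hEsup _ j₀ subset_rfl)
      have h2 : MeasurableSet[⨆ i ∈ (⋃ j ∈ (↑s : Set ℕ), (↑(B j) : Set ℕ)),
          (inferInstance : MeasurableSpace ℝ).comap (f i)] (⋂ j ∈ s, (E j)ᶜ) := by
        refine Finset.measurableSet_biInter _ (fun j hj => MeasurableSet.compl ?_)
        exact hEsup _ j (Set.subset_biUnion_of_mem (u := fun j => (↑(B j) : Set ℕ)) hj)
      rw [Finset.set_biInter_insert, Finset.prod_insert hj₀s, ← ih]
      exact (Indep_iff _ _ _).1 hind _ _ h1 h2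
  set q : ENNReal := ENNReal.ofReal p with hqdef
  have hq1 : q ≤ 1 := ENNReal.ofReal_le_one.2 hp.2.le
  -- lower bound for μ (E j)
  have hEj : ∀ j, 2 ≤ j → j ≤ D - 1 → q ^ w ≤ μ (E j) := by
    intro j hj2 hjD
    have hprod : μ (E j) = ∏ i ∈ B j, μ (A i) :=
      iIndep.meas_biInter hcoord.iIndep (fun i _ => hAcomap i)
    have hcard : (B j).card = a j * (a (j - 1) + 1) := by
      simp only [hBdef, Nat.card_Ico]
      obtain ⟨k, rfl⟩ : ∃ k, j = k + 1 := ⟨j - 1, by omega⟩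
      rw [layerSum_succ]
      simp
    have h1 : q ^ (B j).card ≤ ∏ i ∈ B j, μ (A i) := by
      rw [← Finset.prod_const]
      exact Finset.prod_le_prod' (fun i _ => hneg i)
    have h2 : q ^ w ≤ q ^ (B j).card := by
      apply pow_le_pow_of_le_one zero_le hq1
      rw [hcard]
      exact hw j hj2 hjD
    rw [hprod]
    exact h2.trans h1
  -- upper bound for μ ((E j)ᶜ)
  have hEjc : ∀ j, 2 ≤ j → j ≤ D - 1 → μ ((E j)ᶜ) ≤ 1 - q ^ w := by
    intro j hj2 hjD
    rw [measure_compl (hEm j) (measure_ne_top μ _)]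
    simp only [measure_univ]
    exact tsub_le_tsub_left (hEj j hj2 hjD) 1
  -- the union event
  set U : Set Ω := ⋃ j ∈ Finset.Icc 2 (D - 1), E j with hUdef
  have hUm : MeasurableSet U := Finset.measurableSet_biUnion _ (fun j _ => hEm j)
  have hUc : Uᶜ = ⋂ j ∈ Finset.Icc 2 (D - 1), (E j)ᶜ := by
    simp [hUdef, Set.compl_iUnion]
  have hUcbound : μ Uᶜ ≤ (1 - q ^ w) ^ (D - 2) := by
    rw [hUc, key]
    calc ∏ j ∈ Finset.Icc 2 (D - 1), μ ((E j)ᶜ)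
        ≤ ∏ _j ∈ Finset.Icc 2 (D - 1), (1 - q ^ w) :=
          Finset.prod_le_prod' (fun j hj => by
            simp only [Finset.mem_Icc] at hj
            exact hEjc j hj.1 hj.2)
      _ = (1 - q ^ w) ^ (D - 2) := by
          rw [Finset.prod_const, Nat.card_Icc]
          congr 1
  have hU : 1 - (1 - q ^ w) ^ (D - 2) ≤ μ U := by
    have hμU : μ U = 1 - μ Uᶜ := by
      rw [measure_compl hUm (measure_ne_top μ _), measure_univ,
        ENNReal.sub_sub_cancel ENNReal.one_ne_top prob_le_one]
    rw [hμU]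
    exact tsub_le_tsub_left hUcbound 1
  -- U is contained in the target event
  have hsub : U ⊆ {ω | ∃ c : Fin (a D) → ℝ, ∀ x : Fin (a 0) → ℝ,
      realization a D (Θ0 ω) x = c} := by
    intro ω hω
    simp only [hUdef, Set.mem_iUnion] at hω
    obtain ⟨j, hj, hωE⟩ := hω
    simp only [Finset.mem_Icc] at hj
    have hln : layerNeg a j (Θ0 ω) := by
      intro i hi1 hi2
      have : ω ∈ A i := by
        simp only [hEdef, Set.mem_iInter] at hωE
        exact hωE i (Finset.mem_Ico.2 ⟨hi1, hi2⟩)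
      exact this
    exact realization_const a D hD (Θ0 ω) ⟨j, by omega, by omega, hln⟩
  -- conclude
  have hLHS : ENNReal.ofReal (1 - (1 - p ^ w) ^ (D - 2)) = 1 - (1 - q ^ w) ^ (D - 2) := by
    have hpw1 : p ^ w ≤ 1 := pow_le_one₀ hp.1.le hp.2.le
    have h1pw : (0:ℝ) ≤ 1 - p ^ w := by linarith
    rw [ENNReal.ofReal_sub 1 (pow_nonneg h1pw _), ENNReal.ofReal_one,
      ENNReal.ofReal_pow h1pw, ENNReal.ofReal_sub 1 (pow_nonneg hp.1.le _),
      ENNReal.ofReal_one, ENNReal.ofReal_pow hp.1.le]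
  rw [hLHS]
  exact hU.trans (measure_mono hsub)
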